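/- Let η ∈ (1/2, 1). There exist η̄ ∈ (0,1) and a constant C > 0, depending only on η and the dimension n, such that for every measurable set F ⊆ ℝⁿ and every nonnegative measurable function H on D: ∬_{R_{1−η}(F^{[η̄]}) ∩ D} H(y,t) dγ(y) dt/t ≤ C · ∫_F ∬_D 1_{B(y,t)}(x) · γ(B(y,t))^{−1} · H(y,t) dγ(y) (dt/t) dγ(x). -/

import Mathlib

open MeasureTheory Metric Set
open scoped ENNReal

noncomputable section

/-- Euclidean space ℝⁿ. -/
abbrev E (n : ℕ) := EuclideanSpace ℝ (Fin n)

/-- The standard Gaussian measure on ℝⁿ. -/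
def gaussianM (n : ℕ) : Measure (E n) :=
  volume.withDensity
    (fun x => ENNReal.ofReal ((2 * Real.pi) ^ (-(n : ℝ) / 2) * Real.exp (-‖x‖ ^ 2 / 2)))

/-- m(x) = min {1, 1/|x|} (with value 1 at x = 0). -/
def mFun {n : ℕ} (x : E n) : ℝ := if ‖x‖ ≤ 1 then 1 else ‖x‖⁻¹

/-- The measure `dt/t` on `(0,∞)`. -/
def tMeasure : Measure ℝ :=
  (volume.restrict (Set.Ioi (0 : ℝ))).withDensity fun t => ENNReal.ofReal t⁻¹

/-- The admissible region `D = {(x,t) : 0 < t < m(x)}`. -/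
def Dset (n : ℕ) : Set (E n × ℝ) := {p | 0 < p.2 ∧ p.2 < mFun p.1}

/-- `R_α(A) = {(y,t) : t > 0, d(y,A) < α t}` (stated via a witness in `A`). -/
def Rset (n : ℕ) (α : ℝ) (A : Set (E n)) : Set (E n × ℝ) :=
  {p | 0 < p.2 ∧ ∃ x ∈ A, dist p.1 x < α * p.2}

/-- `A^{[β]}`: the points of admissible `β`-density of `A`, i.e. those `x` with
`γ(A ∩ B) ≥ β γ(B)` for every ball `B ∈ 𝓑_{3/2}` centred at `x`. -/
def densitySet (n : ℕ) (β : ℝ) (A : Set (E n)) : Set (E n) :=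
  {x | ∀ r : ℝ, 0 ≤ r → r ≤ (3 / 2) * mFun x →
    ENNReal.ofReal β * gaussianM n (ball x r) ≤ gaussianM n (A ∩ ball x r)}

def phi (n : ℕ) (x : E n) : ℝ := (2 * Real.pi) ^ (-(n : ℝ) / 2) * Real.exp (-‖x‖ ^ 2 / 2)

lemma phi_pos (n : ℕ) (x : E n) : 0 < phi n x := by
  unfold phi
  positivity

lemma mFun_pos {n : ℕ} (x : E n) : 0 < mFun x := by
  unfold mFun; split
  · norm_num
  · next h => exact inv_pos.2 (by linarith [not_le.mp h])

lemma mFun_le_one {n : ℕ} (x : E n) : mFun x ≤ 1 := by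
  unfold mFun; split
  · exact le_refl 1
  · next h => exact le_of_lt (inv_lt_one_of_one_lt₀ (not_le.mp h))

lemma mFun_mul_norm_le {n : ℕ} (x : E n) : mFun x * ‖x‖ ≤ 1 := by
  unfold mFun; split
  · next h => simpa using h
  · next h =>
    have hx : (0:ℝ) < ‖x‖ := by linarith [not_le.mp h]
    rw [inv_mul_cancel₀ hx.ne']

lemma le_mFun {n : ℕ} (x : E n) (s : ℝ) (hs1 : s ≤ 1) (hsx : s * ‖x‖ ≤ 1) (hs0 : 0 ≤ s) :
    s ≤ mFun x := by
  unfold mFun; split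
  · exact hs1
  · next h =>
    have hx : (0:ℝ) < ‖x‖ := by linarith [not_le.mp h]
    calc s = s * ‖x‖ * ‖x‖⁻¹ := by field_simp
    _ ≤ 1 * ‖x‖⁻¹ := by
        apply mul_le_mul_of_nonneg_right hsx (by positivity)
    _ = ‖x‖⁻¹ := one_mul _

lemma mFun_half {n : ℕ} (x y : E n) (h : dist x y ≤ mFun y) : mFun y ≤ 2 * mFun x := by
  have hxy : ‖x‖ ≤ ‖y‖ + mFun y := by
    have := norm_sub_norm_le x y
    rw [← dist_eq_norm] at this
    linarith
  have h1 := mFun_le_one y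
  have h2 := mFun_mul_norm_le y
  have h3 := mFun_pos y
  have h4 : (0:ℝ) ≤ ‖y‖ := norm_nonneg y
  have key : mFun y / 2 ≤ mFun x := by
    apply le_mFun
    · linarith
    · nlinarith
    · linarith
  linarith

lemma phi_comp {n : ℕ} {x z : E n} {r : ℝ} (hr : r ≤ 8 * mFun x) (hz : z ∈ ball x r) :
    phi n x * Real.exp (-(40:ℝ)) ≤ phi n z ∧ phi n z ≤ phi n x * Real.exp 40 := by
  have hm1 := mFun_le_one x
  have hmn := mFun_mul_norm_le x
  have hm0 := mFun_pos x
  have hxn : (0:ℝ) ≤ ‖x‖ := norm_nonneg x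
  have hzn : (0:ℝ) ≤ ‖z‖ := norm_nonneg z
  have hd : dist z x < r := mem_ball.mp hz
  have habs : |‖z‖ - ‖x‖| ≤ dist z x := abs_norm_sub_norm_le z x
  have h1 : ‖z‖ - ‖x‖ ≤ dist z x := (abs_le.mp habs).2
  have h2 : -(dist z x) ≤ ‖z‖ - ‖x‖ := (abs_le.mp habs).1
  have hd0 : (0:ℝ) ≤ dist z x := dist_nonneg
  have key : |‖z‖ ^ 2 - ‖x‖ ^ 2| ≤ 80 := by
    rw [abs_le]
    constructor <;> nlinarith [abs_le.mp habs]
  have hk1 : -‖x‖ ^ 2 / 2 + -(40:ℝ) ≤ -‖z‖ ^ 2 / 2 := by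
    have := (abs_le.mp key).2; linarith
  have hk2 : -‖z‖ ^ 2 / 2 ≤ -‖x‖ ^ 2 / 2 + 40 := by
    have := (abs_le.mp key).1; linarith
  have hc : (0:ℝ) ≤ (2 * Real.pi) ^ (-(n : ℝ) / 2) := by positivity
  constructor
  · unfold phi
    rw [mul_assoc, ← Real.exp_add]
    exact mul_le_mul_of_nonneg_left (Real.exp_le_exp.2 hk1) hc
  · unfold phi
    rw [mul_assoc, ← Real.exp_add]
    exact mul_le_mul_of_nonneg_left (Real.exp_le_exp.2 hk2) hc

lemma gaussianM_ball_eq {n : ℕ} (x : E n) (r : ℝ) :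
    gaussianM n (ball x r) = ∫⁻ z in ball x r, ENNReal.ofReal (phi n z) ∂volume := by
  rw [gaussianM, withDensity_apply _ measurableSet_ball]
  rfl

lemma phi_measurable (n : ℕ) : Measurable (phi n) := by
  unfold phi
  exact (continuous_const.mul ((continuous_norm.pow 2).neg.div_const 2).rexp).measurable

lemma gauss_ball_le {n : ℕ} {x : E n} {r : ℝ} (hr : r ≤ 8 * mFun x) :
    gaussianM n (ball x r) ≤ ENNReal.ofReal (phi n x * Real.exp 40) * volume (ball x r) := by
  rw [gaussianM_ball_eq, ← setLIntegral_const (ball x r)]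
  exact setLIntegral_mono measurable_const fun z hz =>
    ENNReal.ofReal_le_ofReal (phi_comp hr hz).2

lemma gauss_ball_ge {n : ℕ} {x : E n} {r : ℝ} (hr : r ≤ 8 * mFun x) :
    ENNReal.ofReal (phi n x * Real.exp (-(40:ℝ))) * volume (ball x r) ≤ gaussianM n (ball x r) := by
  rw [gaussianM_ball_eq, ← setLIntegral_const (ball x r)]
  exact setLIntegral_mono (ENNReal.measurable_ofReal.comp (phi_measurable n)) fun z hz =>
    ENNReal.ofReal_le_ofReal (phi_comp hr hz).1

lemma gauss_ball_pos {n : ℕ} {x : E n} {r : ℝ} (hn : 1 ≤ n) (hr0 : 0 < r) :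
    0 < gaussianM n (ball x r) := by
  have hmin : 0 < min r (8 * mFun x) := lt_min hr0 (by linarith [mFun_pos x])
  refine lt_of_lt_of_le ?_ ((gauss_ball_ge (x := x) (min_le_right r (8 * mFun x))).trans
    (measure_mono (ball_subset_ball (min_le_left _ _))))
  have hphi : (0:ℝ) < phi n x * Real.exp (-(40:ℝ)) := by
    have := phi_pos n x; positivity
  exact ENNReal.mul_pos (ENNReal.ofReal_pos.mpr hphi).ne'
    (measure_ball_pos volume x hmin).ne'

lemma gauss_ball_ne_top {n : ℕ} {x : E n} {r : ℝ} (hr : r ≤ 8 * mFun x) :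
    gaussianM n (ball x r) ≠ ⊤ :=
  ((gauss_ball_le hr).trans_lt
    (ENNReal.mul_lt_top ENNReal.ofReal_lt_top measure_ball_lt_top)).ne

lemma E_nontrivial {n : ℕ} (hn : 1 ≤ n) : Nontrivial (E n) := by
  have : 0 < Module.finrank ℝ (E n) := by
    rw [finrank_euclideanSpace_fin]; omega
  exact Module.nontrivial_of_finrank_pos this

lemma vol_ball_scale {n : ℕ} (hn : 1 ≤ n) (x : E n) {r : ℝ} (hr : 0 ≤ r) :
    volume (ball x r) = ENNReal.ofReal (r ^ n) * volume (ball (0 : E n) 1) := by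
  haveI := E_nontrivial hn
  rw [Measure.addHaar_ball volume x hr, finrank_euclideanSpace_fin]

lemma gauss_doubling {n : ℕ} (hn : 1 ≤ n) {x : E n} {r R : ℝ} (h0 : 0 ≤ r)
    (hrR : R ≤ 4 * r) (hR8 : R ≤ 8 * mFun x) (hr8 : r ≤ 8 * mFun x) (hR0 : 0 ≤ R) :
    gaussianM n (ball x R) ≤
      ENNReal.ofReal (Real.exp 80 * 4 ^ n) * gaussianM n (ball x r) := by
  have hphi := phi_pos n x
  calc gaussianM n (ball x R)
      ≤ ENNReal.ofReal (phi n x * Real.exp 40) * volume (ball x R) := gauss_ball_le hR8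
    _ ≤ ENNReal.ofReal (phi n x * Real.exp 40) *
          (ENNReal.ofReal (4 ^ n) * volume (ball x r)) := by
        apply mul_le_mul_right
        rw [vol_ball_scale hn x hR0, vol_ball_scale hn x h0, ← mul_assoc,
          ← ENNReal.ofReal_mul (by positivity)]
        apply mul_le_mul_left
        apply ENNReal.ofReal_le_ofReal
        calc R ^ n ≤ (4 * r) ^ n := pow_le_pow_left₀ hR0 hrR n
          _ = 4 ^ n * r ^ n := mul_pow 4 r n
    _ = ENNReal.ofReal (Real.exp 80 * 4 ^ n) *
          (ENNReal.ofReal (phi n x * Real.exp (-(40:ℝ))) * volume (ball x r)) := by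
        rw [← mul_assoc, ← mul_assoc, ← ENNReal.ofReal_mul (by positivity),
          ← ENNReal.ofReal_mul (by positivity)]
        congr 2
        rw [show Real.exp 80 * 4 ^ n * (phi n x * Real.exp (-(40:ℝ)))
            = phi n x * (Real.exp 80 * Real.exp (-(40:ℝ))) * 4 ^ n by ring,
          ← Real.exp_add]
        norm_num
    _ ≤ ENNReal.ofReal (Real.exp 80 * 4 ^ n) * gaussianM n (ball x r) :=
        mul_le_mul_right (gauss_ball_ge hr8) _



lemma key_density {n : ℕ} (hn : 1 ≤ n) {η : ℝ} (hη : η ∈ Set.Ioo (1 / 2 : ℝ) 1)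
    (F : Set (E n)) {p : E n × ℝ}
    (hp : p ∈ Rset n (1 - η) (densitySet n (1/2) F) ∩ Dset n) :
    ENNReal.ofReal ((1/2) * (Real.exp (-(80:ℝ)) * ((4:ℝ) ^ n)⁻¹)) *
      gaussianM n (ball p.1 p.2) ≤ gaussianM n (ball p.1 p.2 ∩ F) := by
  obtain ⟨⟨ht0, x, hxF, hdist⟩, -, htm⟩ := hp
  obtain ⟨hη2, hη1⟩ := hη
  set y := p.1 with hy
  set t := p.2 with ht
  set r : ℝ := min η (3/4) * t with hr
  have hmy := mFun_pos y
  have hmx := mFun_pos x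
  have hmin2 : (1/2 : ℝ) ≤ min η (3/4) := le_min (by linarith) (by norm_num)
  have hminη : min η (3/4) ≤ η := min_le_left _ _
  have hmin34 : min η (3/4) ≤ 3/4 := min_le_right _ _
  have hr0 : 0 < r := mul_pos (by linarith) ht0
  have hrt : r ≤ (3/4) * t := mul_le_mul_of_nonneg_right hmin34 ht0.le
  have hrη : r ≤ η * t := mul_le_mul_of_nonneg_right hminη ht0.le
  have htr : t ≤ 2 * r := by rw [hr]; nlinarith
  have hdxy : dist x y ≤ mFun y := by
    rw [dist_comm]
    nlinarith [dist_nonneg (x := y) (y := x)]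
  have hm2 : mFun y ≤ 2 * mFun x := mFun_half x y hdxy
  have hr32 : r ≤ (3/2) * mFun x := by nlinarith
  have hdens := hxF r hr0.le hr32
  have hsub1 : ball x r ⊆ ball y t := by
    intro z hz
    rw [mem_ball] at hz ⊢
    calc dist z y ≤ dist z x + dist x y := dist_triangle z x y
      _ < r + (1 - η) * t := by rw [dist_comm x y]; exact add_lt_add_of_lt_of_le hz ((le_of_lt hdist))
      _ ≤ η * t + (1 - η) * t := by linarith
      _ = t := by ring
  have hsub2 : ball y t ⊆ ball x (2 * t) := by
    intro z hz
    rw [mem_ball] at hz ⊢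
    calc dist z x ≤ dist z y + dist y x := dist_triangle z y x
      _ < t + (1 - η) * t := add_lt_add hz hdist
      _ ≤ 2 * t := by nlinarith
  have hdoub : gaussianM n (ball x (2 * t)) ≤
      ENNReal.ofReal (Real.exp 80 * 4 ^ n) * gaussianM n (ball x r) := by
    apply gauss_doubling hn hr0.le (by linarith) (by nlinarith) (by nlinarith) (by linarith)
  have hCc : ((1/2 : ℝ) * (Real.exp (-(80:ℝ)) * ((4:ℝ) ^ n)⁻¹)) * (Real.exp 80 * 4 ^ n)
      = 1/2 := by
    rw [Real.exp_neg]
    have h1 : Real.exp 80 ≠ 0 := (Real.exp_pos 80).ne'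
    have h2 : ((4:ℝ) ^ n) ≠ 0 := by positivity
    field_simp
  calc ENNReal.ofReal ((1/2) * (Real.exp (-(80:ℝ)) * ((4:ℝ) ^ n)⁻¹)) * gaussianM n (ball y t)
      ≤ ENNReal.ofReal ((1/2) * (Real.exp (-(80:ℝ)) * ((4:ℝ) ^ n)⁻¹)) *
        (ENNReal.ofReal (Real.exp 80 * 4 ^ n) * gaussianM n (ball x r)) :=
        mul_le_mul_right ((measure_mono hsub2).trans hdoub) _
    _ = ENNReal.ofReal (1/2) * gaussianM n (ball x r) := by
        rw [← mul_assoc, ← ENNReal.ofReal_mul (by positivity), hCc]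
    _ ≤ gaussianM n (F ∩ ball x r) := hdens
    _ ≤ gaussianM n (ball y t ∩ F) := by
        apply measure_mono
        exact (Set.inter_subset_inter_right F hsub1).trans (Set.inter_comm F (ball y t)).subset

instance gaussianM_sfinite (n : ℕ) : SFinite (gaussianM n) := by
  unfold gaussianM; infer_instance

instance tMeasure_sfinite : SFinite tMeasure := by
  unfold tMeasure; infer_instance

lemma measurable_mFun (n : ℕ) : Measurable (mFun : E n → ℝ) := by
  unfold mFun
  exact Measurable.ite (measurableSet_le measurable_norm measurable_const)
    measurable_const measurable_norm.inv

lemma measurableSet_Dset (n : ℕ) : MeasurableSet (Dset n) := by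
  apply MeasurableSet.inter
  · exact measurableSet_lt measurable_const (measurable_snd : Measurable fun p : E n × ℝ => p.2)
  · exact measurableSet_lt measurable_snd ((measurable_mFun n).comp measurable_fst)

lemma measurableSet_Rset (n : ℕ) (α : ℝ) (A : Set (E n)) : MeasurableSet (Rset n α A) := by
  have : Rset n α A = {p : E n × ℝ | 0 < p.2} ∩ ⋃ x ∈ A, {p : E n × ℝ | dist p.1 x < α * p.2} := by
    ext p
    simp only [Rset, Set.mem_inter_iff, Set.mem_setOf_eq, Set.mem_iUnion, exists_prop]
  rw [this]
  apply MeasurableSet.inter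
  · exact measurableSet_lt measurable_const measurable_snd
  · refine (isOpen_biUnion fun x _ => ?_).measurableSet
    exact isOpen_lt (continuous_fst.dist continuous_const) (continuous_const.mul continuous_snd)

lemma measurable_gaussBall (n : ℕ) :
    Measurable fun q : E n × ℝ => gaussianM n (ball q.1 q.2) := by
  have hT : MeasurableSet {w : (E n × ℝ) × E n | dist w.2 w.1.1 < w.1.2} :=
    (isOpen_lt (continuous_snd.dist (continuous_fst.fst))
      (continuous_fst.snd)).measurableSet
  have heq : (fun q : E n × ℝ => gaussianM n (ball q.1 q.2)) = fun q =>
      ∫⁻ z, ({w : (E n × ℝ) × E n | dist w.2 w.1.1 < w.1.2}).indicator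
        (fun w => ENNReal.ofReal (phi n w.2)) (q, z) ∂volume := by
    funext q
    have : ∀ z : E n, ({w : (E n × ℝ) × E n | dist w.2 w.1.1 < w.1.2}).indicator
        (fun w => ENNReal.ofReal (phi n w.2)) (q, z)
        = (ball q.1 q.2).indicator (fun z => ENNReal.ofReal (phi n z)) z := by
      intro z
      simp only [Set.indicator_apply, Set.mem_setOf_eq, mem_ball]
      rfl
    simp_rw [this]
    rw [lintegral_indicator measurableSet_ball, gaussianM_ball_eq]
  rw [heq]
  apply Measurable.lintegral_prod_right'
  exact (ENNReal.measurable_ofReal.comp ((phi_measurable n).comp measurable_snd)).indicator hT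

/-- For `η ∈ (1/2,1)` there are `η̄ ∈ (0,1)` and `C > 0`, depending only on `η` and `n`,
such that for every measurable `F ⊆ ℝⁿ` and nonnegative measurable `H` on `D`:
`∬_{R_{1-η}(F^{[η̄]}) ∩ D} H dγ dt/t ≤ C ∫_F ∬_D 1_{B(y,t)}(x) γ(B(y,t))⁻¹ H(y,t) dγ(y) dt/t dγ(x)`. -/
theorem stmt11 (n : ℕ) (hn : 1 ≤ n) (η : ℝ) (hη : η ∈ Set.Ioo (1 / 2 : ℝ) 1) :
    ∃ ηb ∈ Set.Ioo (0 : ℝ) 1, ∃ C : ℝ, 0 < C ∧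
      ∀ F : Set (E n), MeasurableSet F →
        ∀ H : E n × ℝ → ℝ≥0∞, Measurable H →
          (∫⁻ p in Rset n (1 - η) (densitySet n ηb F) ∩ Dset n, H p
              ∂((gaussianM n).prod tMeasure)) ≤
            ENNReal.ofReal C *
              ∫⁻ x in F, (∫⁻ p in Dset n,
                  (ball p.1 p.2).indicator (fun _ => (gaussianM n (ball p.1 p.2))⁻¹) x * H p
                  ∂((gaussianM n).prod tMeasure)) ∂(gaussianM n) := by
  set c : ℝ := (1/2) * (Real.exp (-(80:ℝ)) * ((4:ℝ) ^ n)⁻¹) with hc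
  have hc0 : 0 < c := by rw [hc]; positivity
  refine ⟨1/2, ⟨by norm_num, by norm_num⟩, c⁻¹, inv_pos.2 hc0, ?_⟩
  intro F hF H hH
  set γ := gaussianM n with hγ
  set μ := (gaussianM n).prod tMeasure with hμ
  set R := Rset n (1 - η) (densitySet n (1/2) F) with hR
  -- measurability of the joint integrand
  have hS : MeasurableSet {q : E n × (E n × ℝ) | dist q.1 q.2.1 < q.2.2} :=
    (isOpen_lt (continuous_fst.dist continuous_snd.fst) continuous_snd.snd).measurableSet
  have hfm : Measurable (Function.uncurry fun (x : E n) (p : E n × ℝ) =>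
      (ball p.1 p.2).indicator (fun _ => (γ (ball p.1 p.2))⁻¹) x * H p) := by
    have : (Function.uncurry fun (x : E n) (p : E n × ℝ) =>
        (ball p.1 p.2).indicator (fun _ => (γ (ball p.1 p.2))⁻¹) x * H p)
        = fun q : E n × (E n × ℝ) =>
          ({q : E n × (E n × ℝ) | dist q.1 q.2.1 < q.2.2}).indicator
            (fun q => (γ (ball q.2.1 q.2.2))⁻¹) q * H q.2 := by
      classical
      funext q
      simp only [Function.uncurry]
      rw [Set.indicator_apply, Set.indicator_apply]
      simp only [Set.mem_setOf_eq, mem_ball]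
    rw [this]
    exact ((((measurable_gaussBall n).comp measurable_snd).inv).indicator hS).mul
      (hH.comp measurable_snd)
  -- Tonelli swap and inner computation
  have hswap : (∫⁻ x in F, ∫⁻ p in Dset n,
        (ball p.1 p.2).indicator (fun _ => (γ (ball p.1 p.2))⁻¹) x * H p ∂μ ∂γ)
      = ∫⁻ p in Dset n, ((γ (ball p.1 p.2))⁻¹ * γ (ball p.1 p.2 ∩ F)) * H p ∂μ := by
    rw [lintegral_lintegral_swap hfm.aemeasurable]
    refine lintegral_congr fun p => ?_
    rw [lintegral_mul_const _ (measurable_const.indicator measurableSet_ball),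
      lintegral_indicator measurableSet_ball, setLIntegral_const,
      Measure.restrict_apply measurableSet_ball]
  rw [hswap]
  -- rewrite LHS as an integral of an indicator over Dset
  have hRD : MeasurableSet (R ∩ Dset n) :=
    (measurableSet_Rset n (1 - η) _).inter (measurableSet_Dset n)
  have hLHS : (∫⁻ p in R ∩ Dset n, H p ∂μ)
      = ∫⁻ p in Dset n, (R ∩ Dset n).indicator H p ∂μ := by
    rw [lintegral_indicator hRD, Measure.restrict_restrict hRD, Set.inter_assoc,
      Set.inter_self]
  rw [hLHS]
  -- pointwise bound
  have hpoint : ∀ p : E n × ℝ, (R ∩ Dset n).indicator H p ≤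
      ENNReal.ofReal c⁻¹ * (((γ (ball p.1 p.2))⁻¹ * γ (ball p.1 p.2 ∩ F)) * H p) := by
    intro p
    by_cases hp : p ∈ R ∩ Dset n
    · rw [Set.indicator_of_mem hp]
      have hkey := key_density hn hη F hp
      obtain ⟨-, ht0, htm⟩ := hp
      have hm0 := mFun_pos p.1
      have ht8 : p.2 ≤ 8 * mFun p.1 := by linarith
      have hne0 : γ (ball p.1 p.2) ≠ 0 := (gauss_ball_pos hn ht0).ne'
      have hnetop : γ (ball p.1 p.2) ≠ ⊤ := gauss_ball_ne_top ht8
      have h1 : (1 : ℝ≥0∞) ≤ ENNReal.ofReal c⁻¹ *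
          ((γ (ball p.1 p.2))⁻¹ * γ (ball p.1 p.2 ∩ F)) := by
        calc (1 : ℝ≥0∞) = ENNReal.ofReal c⁻¹ * ENNReal.ofReal c := by
              rw [← ENNReal.ofReal_mul (inv_nonneg.2 hc0.le), inv_mul_cancel₀ hc0.ne',
                ENNReal.ofReal_one]
          _ = ENNReal.ofReal c⁻¹ * ((γ (ball p.1 p.2))⁻¹ *
                (ENNReal.ofReal c * γ (ball p.1 p.2))) := by
              rw [mul_comm (ENNReal.ofReal c) (γ (ball p.1 p.2)), ← mul_assoc
                (γ (ball p.1 p.2))⁻¹, ENNReal.inv_mul_cancel hne0 hnetop, one_mul]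
          _ ≤ ENNReal.ofReal c⁻¹ * ((γ (ball p.1 p.2))⁻¹ * γ (ball p.1 p.2 ∩ F)) :=
              mul_le_mul_right (mul_le_mul_right hkey _) _
      calc H p = 1 * H p := (one_mul _).symm
        _ ≤ (ENNReal.ofReal c⁻¹ * ((γ (ball p.1 p.2))⁻¹ * γ (ball p.1 p.2 ∩ F))) * H p :=
            mul_le_mul_left h1 _
        _ = ENNReal.ofReal c⁻¹ * (((γ (ball p.1 p.2))⁻¹ * γ (ball p.1 p.2 ∩ F)) * H p) := by
            ring
    · rw [Set.indicator_of_notMem hp]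
      exact zero_le
  calc (∫⁻ p in Dset n, (R ∩ Dset n).indicator H p ∂μ)
      ≤ ∫⁻ p in Dset n, ENNReal.ofReal c⁻¹ *
          (((γ (ball p.1 p.2))⁻¹ * γ (ball p.1 p.2 ∩ F)) * H p) ∂μ :=
        lintegral_mono fun p => hpoint p
    _ = ENNReal.ofReal c⁻¹ *
          ∫⁻ p in Dset n, ((γ (ball p.1 p.2))⁻¹ * γ (ball p.1 p.2 ∩ F)) * H p ∂μ :=
        lintegral_const_mul' _ _ ENNReal.ofReal_ne_top
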